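/- If A is a symmetric Frobenius algebra over a commutative ring k with nondegenerate symmetric associative pairing ⟨-,-⟩ : A ⊗ A → k, then the endomorphism operad End_A(n) = Hom_k(A^{⊗n}, A) carries cyclic ℤ/(n+1)ℤ-actions, defined via the isomorphisms Hom_k(A^{⊗n},A) ≅ Hom_k(A^{⊗(n+1)},k) induced by the pairing and cyclic permutation of the n+1 tensor factors, and the operadic ∘ᵢ-compositions satisfy the cyclic operad equivariance relations: τ_{m+n-1}(x ∘₁ y) = τ_n(y) ∘_n τ_m(x) and τ_{m+n-1}(x ∘ᵢ y) = τ_m(x) ∘_{i-1} y for i > 1, where τ_m is the standard cyclic generator. -/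

import Mathlib

/-- Operadic insertion `x ∘ᵢ y` for multilinear operations: insert the `n`-ary operation
`g` into the `i`-th argument (0-indexed) of the `(p+1)`-ary operation `f`. -/
def insertOp {A : Type*} {p n : ℕ} (f : (Fin (p+1) → A) → A) (i : Fin (p+1))
    (g : (Fin n → A) → A) : (Fin (p + n) → A) → A :=
  fun a => f (fun t =>
    if _ : (t : ℕ) < (i : ℕ) then a ⟨t, by have := t.isLt; have := i.isLt; omega⟩
    else if _ : (t : ℕ) = (i : ℕ) then
      g (fun s => a ⟨(i : ℕ) + (s : ℕ), by have := i.isLt; have := s.isLt; omega⟩)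
    else a ⟨(t : ℕ) + n - 1, by have := t.isLt; have := i.isLt; omega⟩)

/-- `g` is the cyclic rotation `τ f` of the `n`-ary operation `f` with respect to the
pairing `B`: identifying an `n`-ary operation `f` with the `(n+1)`-linear form
`(a₀,…,a_n) ↦ ⟨a₀, f(a₁,…,a_n)⟩`, the form of `g` is the form of `f` with cyclically
rotated arguments `(a₀,…,a_n) ↦ (a_n,a₀,…,a_{n-1})`. -/
def IsCyclicRotation {kk A : Type*} [CommRing kk] [Ring A] [Algebra kk A]
    (B : A →ₗ[kk] A →ₗ[kk] kk) (n : ℕ) (f g : (Fin n → A) → A) : Prop :=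
  ∀ a : Fin (n+1) → A,
    B (a 0) (g (fun t : Fin n => a t.succ)) =
      B (a (Fin.last n)) (f (fun t : Fin n => a t.castSucc))

section helpers
variable {kk A : Type*} [CommRing kk] [Ring A] [Algebra kk A]
  {B : A →ₗ[kk] A →ₗ[kk] kk}

theorem rot_apply {m : ℕ} {f g : (Fin (m+1) → A) → A}
    (h : IsCyclicRotation B (m+1) f g) (a₀ : A) (v : Fin (m+1) → A) :
    B a₀ (g v) = B (v (Fin.last m))
      (f (Fin.cases a₀ (fun j : Fin m => v j.castSucc))) := by
  have h1 := h (Fin.cons a₀ v)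
  simp only [Fin.cons_zero, Fin.cons_succ] at h1
  have e1 : (Fin.cons a₀ v : Fin (m+2) → A) (Fin.last (m+1)) = v (Fin.last m) := by
    rw [← Fin.succ_last, Fin.cons_succ]
  have e2 : (fun t : Fin (m+1) => (Fin.cons a₀ v : Fin (m+2) → A) t.castSucc)
      = Fin.cases (motive := fun _ => A) a₀ (fun j : Fin m => v j.castSucc) := by
    funext t
    cases t using Fin.cases with
    | zero => simp
    | succ j => simp [← Fin.succ_castSucc]
  rw [e1, e2] at h1
  exact h1

theorem rot_unique (hnd : ∀ b : A, (∀ a : A, B a b = 0) → b = 0)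
    {n : ℕ} {f g g' : (Fin n → A) → A}
    (hg : IsCyclicRotation B n f g) (hg' : IsCyclicRotation B n f g') : g = g' := by
  funext v
  have key : ∀ a₀ : A, B a₀ (g v) = B a₀ (g' v) := by
    intro a₀
    have h1 := hg (Fin.cons a₀ v)
    have h2 := hg' (Fin.cons a₀ v)
    simp only [Fin.cons_zero, Fin.cons_succ] at h1 h2
    rw [h1, ← h2]
  have := hnd (g v - g' v) (fun a₀ => by rw [map_sub, key a₀, sub_self])
  exact sub_eq_zero.mp this

end helpers

theorem rel1 {kk A : Type*} [CommRing kk] [Ring A] [Algebra kk A]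
    {B : A →ₗ[kk] A →ₗ[kk] kk}
    (hsymm : ∀ a b : A, B a b = B b a)
    (hnd : ∀ b : A, (∀ a : A, B a b = 0) → b = 0)
    (p q : ℕ) (x : (Fin (p+1) → A) → A) (y : (Fin (q+1) → A) → A)
    (tx : (Fin (p+1) → A) → A) (ty : (Fin (q+1) → A) → A)
    (tz : (Fin (p + (q+1)) → A) → A)
    (hx : IsCyclicRotation B (p+1) x tx) (hy : IsCyclicRotation B (q+1) y ty)
    (hz : IsCyclicRotation B (p + (q+1)) (insertOp x 0 y) tz)
    (a : Fin (p + (q+1)) → A) :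
    tz a = insertOp ty (Fin.last q) tx
      (fun s : Fin (q + (p+1)) => a (Fin.cast (by have _h := 0; omega) s)) := by
  have key : tz = fun b : Fin (p + (q+1)) → A => insertOp ty (Fin.last q) tx
      (fun s : Fin (q + (p+1)) => b (Fin.cast (by omega) s)) := by
    refine rot_unique hnd hz ?_
    intro a
    show B (a 0) (insertOp ty _ tx _) = _
    simp only [insertOp]
    rw [rot_apply hy]
    rw [dif_neg (by simp), dif_pos rfl]
    rw [hsymm]
    rw [rot_apply hx]
    congr 1
    · congr 1
      congr 1
      ext
      simp only [Fin.val_succ, Fin.coe_cast, Fin.val_last]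
      omega
    · congr 1
      funext t
      cases t using Fin.cases with
      | zero =>
        simp only [Fin.cases_zero]
        rw [dif_neg (lt_irrefl _), dif_pos trivial]
        congr 1
        funext s
        cases s using Fin.cases with
        | zero =>
          simp only [Fin.cases_zero]
          congr 1
        | succ j =>
          simp only [Fin.cases_succ, Fin.coe_castSucc, Fin.val_last]
          rw [dif_pos j.isLt]
          congr 1
          ext
          simp only [Fin.val_succ, Fin.coe_cast, Fin.coe_castSucc, Fin.val_zero]
          omega
      | succ j =>
        simp only [Fin.cases_succ, Fin.val_succ]
        rw [dif_neg (by simp), dif_neg (by simp)]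
        congr 1
        ext
        simp only [Fin.val_succ, Fin.coe_cast, Fin.coe_castSucc, Fin.val_last]
        omega
  rw [key]

theorem rel2 {kk A : Type*} [CommRing kk] [Ring A] [Algebra kk A]
    {B : A →ₗ[kk] A →ₗ[kk] kk}
    (hnd : ∀ b : A, (∀ a : A, B a b = 0) → b = 0)
    (p n : ℕ) (x : (Fin (p+1) → A) → A) (y : (Fin n → A) → A)
    (i : Fin (p+1)) (hi : i ≠ 0)
    (tx : (Fin (p+1) → A) → A) (tz : (Fin (p + n) → A) → A)
    (hx : IsCyclicRotation B (p+1) x tx)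
    (hz : IsCyclicRotation B (p + n) (insertOp x i y) tz) :
    tz = insertOp tx ⟨(i : ℕ) - 1, by exact Nat.lt_of_le_of_lt (Nat.sub_le _ _) i.isLt⟩ y := by
  have hi1 : 1 ≤ (i : ℕ) := Fin.pos_of_ne_zero hi
  have hip : (i : ℕ) ≤ p := by have := i.isLt; omega
  refine rot_unique hnd hz ?_
  intro a
  show B (a 0) (insertOp tx _ y _) = _
  simp only [insertOp]
  rw [rot_apply hx]
  congr 1
  · congr 1
    rw [dif_neg (by simp only [Fin.val_last]; omega),
      dif_neg (by simp only [Fin.val_last]; omega)]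
    congr 1
    ext
    simp only [Fin.val_succ, Fin.val_last]
    omega
  · congr 1
    funext t
    cases t using Fin.cases with
    | zero =>
      simp only [Fin.cases_zero]
      rw [dif_pos (by simp only [Fin.val_zero]; omega)]
      congr 1
    | succ j =>
      simp only [Fin.cases_succ, Fin.coe_castSucc, Fin.val_succ]
      split_ifs <;>
        first
          | omega
          | (congr 1 <;> (try ext) <;> simp only [Fin.val_succ, Fin.coe_castSucc] <;> omega)
          | (congr 1; funext s; congr 1; ext;
             simp only [Fin.val_succ, Fin.coe_castSucc]; omega)

/-- For a symmetric Frobenius algebra (nondegenerate symmetric associative pairing `B`),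
the endomorphism operad `End_A(n) = Hom(A^{⊗n},A)` carries cyclic `ℤ/(n+1)ℤ`-actions
defined via the pairing, and the operadic insertions satisfy the equivariance relations
of a cyclic operad:
`τ_{m+n-1}(x ∘₁ y) = τ_n(y) ∘_n τ_m(x)` and `τ_{m+n-1}(x ∘ᵢ y) = τ_m(x) ∘_{i-1} y`
for `i > 1`. -/
theorem cyclic_operad_relations_for_frobenius
    (kk : Type*) [CommRing kk] (A : Type*) [Ring A] [Algebra kk A]
    (B : A →ₗ[kk] A →ₗ[kk] kk)
    (hsymm : ∀ a b : A, B a b = B b a)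
    (hassoc : ∀ a b c : A, B (a * b) c = B a (b * c))
    (hnd : ∀ b : A, (∀ a : A, B a b = 0) → b = 0) :
    -- first relation: τ(x ∘₁ y) = τ(y) ∘_n τ(x)
    (∀ (p q : ℕ) (x : (Fin (p+1) → A) → A) (y : (Fin (q+1) → A) → A)
        (tx : (Fin (p+1) → A) → A) (ty : (Fin (q+1) → A) → A)
        (tz : (Fin (p + (q+1)) → A) → A),
      IsCyclicRotation B (p+1) x tx → IsCyclicRotation B (q+1) y ty →
      IsCyclicRotation B (p + (q+1)) (insertOp x 0 y) tz →
      ∀ a : Fin (p + (q+1)) → A,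
        tz a = insertOp ty (Fin.last q) tx
          (fun s : Fin (q + (p+1)) => a (Fin.cast (by omega) s))) ∧
    -- second relation: τ(x ∘ᵢ y) = τ(x) ∘_{i-1} y for i > 1
    (∀ (p n : ℕ) (x : (Fin (p+1) → A) → A) (y : (Fin n → A) → A)
        (i : Fin (p+1)), i ≠ 0 →
      ∀ (tx : (Fin (p+1) → A) → A) (tz : (Fin (p + n) → A) → A),
        IsCyclicRotation B (p+1) x tx →
        IsCyclicRotation B (p + n) (insertOp x i y) tz →
        tz = insertOp tx ⟨(i : ℕ) - 1, by have := i.isLt; omega⟩ y) := by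
  exact ⟨fun p q x y tx ty tz hx hy hz a => rel1 hsymm hnd p q x y tx ty tz hx hy hz a,
    fun p n x y i hi tx tz hx hz => rel2 hnd p n x y i hi tx tz hx hz⟩
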